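/- Equational completeness of domain semirings for binary relations: for any {∘, +, 0, 1, D}-terms s and t over variables Σ, the equation s = t holds in every domain semiring (under every assignment of values to the variables) if and only if for every set X and every assignment of binary relations on X to the variables, the relational interpretations of s and t coincide. -/

import Mathlib

inductive PreTree (α : Type) : Type
  | node : Bool → List (α × PreTree α) → PreTree α

namespace PreTree

variable {α : Type}

def mark : PreTree α → Bool
  | node b _ => b

def children : PreTree α → List (α × PreTree α)
  | node _ cs => cs

def le : PreTree α → PreTree α → Prop
  | node b₁ c₁, node b₂ c₂ =>
      (b₂ = true → b₁ = true) ∧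
      ∀ q, q ∈ c₂ → ∃ p, p ∈ c₁ ∧ p.1 = q.1 ∧ le p.2 q.2
termination_by _ t₂ => sizeOf t₂
decreasing_by
  have h := List.sizeOf_lt_of_mem ‹q ∈ c₂›
  obtain ⟨qa, qt⟩ := q
  simp at h ⊢
  omega

-- The reduced form of a tree: reduce all child subtrees, then for each
-- label keep only the `≤`-minimal attached subtrees.
open scoped Classical in
noncomputable def reduce : PreTree α → PreTree α
  | node b cs =>
      let cs' : List (α × PreTree α) := cs.attach.map fun p => (p.1.1, reduce p.1.2)
      node b (cs'.filter fun q =>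
        decide (∀ q' ∈ cs', q'.1 = q.1 → le q'.2 q.2 → le q.2 q'.2))
termination_by t => sizeOf t
decreasing_by
  have h := List.sizeOf_lt_of_mem p.2
  obtain ⟨⟨pa, pt⟩, hp⟩ := p
  simp at h ⊢
  omega

/-- A tree is reduced if it equals its reduced form. -/
def Reduced (T : PreTree α) : Prop := reduce T = T

/-- The number of marked (point) vertices of a tree. -/
def markCount : PreTree α → ℕ
  | node b cs => (cond b 1 0) + (cs.attach.map fun p => markCount p.1.2).sum
termination_by t => sizeOf t
decreasing_by
  have h := List.sizeOf_lt_of_mem p.2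
  obtain ⟨⟨pa, pt⟩, hp⟩ := p
  simp at h ⊢
  omega

/-- A pointed tree: exactly one vertex is marked as the point. -/
def Pointed (T : PreTree α) : Prop := markCount T = 1

/-- Remove all point marks. -/
def unmark : PreTree α → PreTree α
  | node _ cs => node false (cs.attach.map fun p => (p.1.1, unmark p.1.2))
termination_by t => sizeOf t
decreasing_by
  have h := List.sizeOf_lt_of_mem p.2
  obtain ⟨⟨pa, pt⟩, hp⟩ := p
  simp at h ⊢
  omega

/-- Graft the tree `S` onto the point of `T` (identifying the point of `T`
with the root of `S`); the marks of `S` determine the new point. -/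
def graft (S : PreTree α) : PreTree α → PreTree α
  | node b cs =>
      if b then node S.mark (cs ++ S.children)
      else node b (cs.attach.map fun p => (p.1.1, graft S p.1.2))
termination_by t => sizeOf t
decreasing_by
  have h := List.sizeOf_lt_of_mem p.2
  obtain ⟨⟨pa, pt⟩, hp⟩ := p
  simp at h ⊢
  omega

/-- Move the point of `T` to its root. -/
def pointAtRoot (T : PreTree α) : PreTree α := node true (unmark T).children

/-- Pointed tree concatenation `T ∘ S`. -/
noncomputable def concat (T S : PreTree α) : PreTree α := reduce (graft S T)

/-- The domain operation `D(T)` on pointed trees. -/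
noncomputable def domTree (T : PreTree α) : PreTree α := reduce (pointAtRoot T)

/-- The trivial pointed tree: one vertex, both root and point. -/
def trivialTree : PreTree α := node true []

/-- The two-vertex pointed tree with a single `a`-labelled edge, point at the child. -/
def arrow (a : α) : PreTree α := node false [(a, node true [])]


/-- Set-theoretic equality of trees (children lists regarded as sets). -/
def eqv : PreTree α → PreTree α → Prop
  | node b₁ c₁, node b₂ c₂ =>
      b₁ = b₂ ∧
      (∀ p, p ∈ c₁ → ∃ q, q ∈ c₂ ∧ p.1 = q.1 ∧ eqv p.2 q.2) ∧
      (∀ q, q ∈ c₂ → ∃ p : {x // x ∈ c₁}, p.1.1 = q.1 ∧ eqv p.1.2 q.2)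
termination_by t₁ _ => sizeOf t₁
decreasing_by
  · have h₁ := List.sizeOf_lt_of_mem ‹p ∈ c₁›
    obtain ⟨pa, pt⟩ := p
    simp at h₁ ⊢
    omega
  · have h₁ := List.sizeOf_lt_of_mem p.2
    obtain ⟨⟨pa, pt⟩, hp⟩ := p
    simp at h₁ ⊢
    omega


/-- The subtree of `T` at position `p` (a list of child indices), if it exists. -/
def subAt : List ℕ → PreTree α → Option (PreTree α)
  | [], t => some t
  | i :: is, node _ cs => (cs[i]?).bind fun p => subAt is p.2

/-- `p` is a vertex of `T`. -/
def IsVertex (T : PreTree α) (p : List ℕ) : Prop := ∃ t, subAt p T = some t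

/-- The vertex `p` of `T` is the point (is marked). -/
def IsPoint (T : PreTree α) (p : List ℕ) : Prop :=
  ∃ t, subAt p T = some t ∧ t.mark = true

/-- There is an `a`-labelled edge of `T` from vertex `p` (the parent) to
vertex `q` (the child). -/
def Edge (T : PreTree α) (a : α) (p q : List ℕ) : Prop :=
  ∃ c, subAt p T = some c ∧ ∃ i t, c.children[i]? = some (a, t) ∧ q = p ++ [i]

theorem root_isVertex (T : PreTree α) : IsVertex T [] := ⟨T, rfl⟩

/-- A homomorphism of pointed labelled rooted trees from `S` to `T`:
a map of vertices preserving the labelled edge relations, sending the root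
to the root and points to points. -/
def HomTree (S T : PreTree α) : Prop :=
  ∃ θ : List ℕ → List ℕ,
    θ [] = [] ∧
    (∀ p, IsVertex S p → IsVertex T (θ p)) ∧
    (∀ a p q, Edge S a p q → Edge T a (θ p) (θ q)) ∧
    (∀ p, IsPoint S p → IsPoint T (θ p))

/-- A homomorphism of the pointed tree `T`, viewed as a relational structure,
into the relational structure `(X, f)`, mapping the root of `T` to `x` and
the point of `T` to `y`. -/
def HomInto {X : Type} (T : PreTree α) (f : α → X → X → Prop) (x y : X) : Prop :=
  ∃ θ : List ℕ → X,
    θ [] = x ∧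
    (∀ a p q, Edge T a p q → f a (θ p) (θ q)) ∧
    (∀ p, IsPoint T p → θ p = y)


end PreTree

namespace FreeKAD

/-- Terms of the signature `{∘, 1, D}`. -/
inductive Term1 (α : Type) : Type
  | var : α → Term1 α
  | one : Term1 α
  | comp : Term1 α → Term1 α → Term1 α
  | dom : Term1 α → Term1 α

/-- Terms of the signature `{∘, +, *, 0, 1, D}` (Kleene algebra with domain). -/
inductive TermK (α : Type) : Type
  | var : α → TermK α
  | zero : TermK α
  | one : TermK α
  | comp : TermK α → TermK α → TermK α
  | add : TermK α → TermK α → TermK α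
  | star : TermK α → TermK α
  | dom : TermK α → TermK α

variable {α : Type}

/-- The relational interpretation of a `{∘, 1, D}`-term over a set `X`,
under an assignment `f` of binary relations on `X` to the variables. -/
def rinterp1 {X : Type} (f : α → X → X → Prop) : Term1 α → X → X → Prop
  | .var a => f a
  | .one => fun x y => x = y
  | .comp s t => fun x y => ∃ z, rinterp1 f s x z ∧ rinterp1 f t z y
  | .dom s => fun x y => x = y ∧ ∃ z, rinterp1 f s x z

/-- The relational interpretation of a `{∘, +, *, 0, 1, D}`-term over a set `X`,
under an assignment `f` of binary relations on `X` to the variables. -/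
def rinterpK {X : Type} (f : α → X → X → Prop) : TermK α → X → X → Prop
  | .var a => f a
  | .zero => fun _ _ => False
  | .one => fun x y => x = y
  | .comp s t => fun x y => ∃ z, rinterpK f s x z ∧ rinterpK f t z y
  | .add s t => fun x y => rinterpK f s x y ∨ rinterpK f t x y
  | .star s => Relation.ReflTransGen (rinterpK f s)
  | .dom s => fun x y => x = y ∧ ∃ z, rinterpK f s x z

/-- Composition of binary relations. -/
def relComp {X : Type} (R S : X → X → Prop) : X → X → Prop :=
  fun x y => ∃ z, R x z ∧ S z y

/-- Union of binary relations. -/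
def relUnion {X : Type} (R S : X → X → Prop) : X → X → Prop :=
  fun x y => R x y ∨ S x y

/-- The domain operation on binary relations. -/
def relDom {X : Type} (R : X → X → Prop) : X → X → Prop :=
  fun x y => x = y ∧ ∃ z, R x z

/-- The identity relation. -/
def relId {X : Type} : X → X → Prop := fun x y => x = y

/-- The empty relation. -/
def relEmpty {X : Type} : X → X → Prop := fun _ _ => False

end FreeKAD

namespace FreeKAD

open PreTree

variable {α : Type}

/-- The single-tree interpretation of `{∘, 1, D}`-terms. -/
noncomputable def interp1 : Term1 α → PreTree α
  | .var a => arrow a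
  | .one => trivialTree
  | .comp s t => concat (interp1 s) (interp1 t)
  | .dom s => domTree (interp1 s)

/-- The set of `≤`-maximal elements of a set of trees. -/
def maximalSet (K : Set (PreTree α)) : Set (PreTree α) :=
  {T | T ∈ K ∧ ∀ S ∈ K, le T S → le S T}

/-- Elementwise lifting of pointed tree concatenation to sets of trees. -/
def liftComp (K L : Set (PreTree α)) : Set (PreTree α) :=
  {U | ∃ T ∈ K, ∃ S ∈ L, U = concat T S}

/-- Elementwise lifting of the domain operation to sets of trees. -/
def liftDom (K : Set (PreTree α)) : Set (PreTree α) :=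
  {U | ∃ T ∈ K, U = domTree T}

/-- Iterated lifted concatenation: `K^0 = {trivial}`, `K^(i+1) = K^i ∘ K`. -/
def powC (K : Set (PreTree α)) : ℕ → Set (PreTree α)
  | 0 => {trivialTree}
  | i + 1 => liftComp (powC K i) K

/-- The standard tree interpretation of `{∘, +, *, 0, 1, D}`-terms. -/
def sinterp : TermK α → Set (PreTree α)
  | .var a => {arrow a}
  | .zero => ∅
  | .one => {trivialTree}
  | .comp s t => maximalSet (liftComp (sinterp s) (sinterp t))
  | .add s t => maximalSet (sinterp s ∪ sinterp t)
  | .star s => maximalSet (⋃ i : ℕ, powC (sinterp s) (i + 1))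
  | .dom s => maximalSet (liftDom (sinterp s))

/-- Equality of sets of trees, with trees compared as (hereditarily finite) sets. -/
def SetEqv (K L : Set (PreTree α)) : Prop :=
  (∀ T ∈ K, ∃ S ∈ L, eqv T S) ∧ (∀ S ∈ L, ∃ T ∈ K, eqv T S)

/-- A set of reduced pointed trees is regular if it is the standard tree
interpretation of some `{∘, +, *, 0, 1, D}`-term. -/
def Regular (L : Set (PreTree α)) : Prop := ∃ t : TermK α, L = sinterp t

/-- The set of reduced trees lying `≤`-below some member of `L`. -/
def down (L : Set (PreTree α)) : Set (PreTree α) :=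
  {T | Reduced T ∧ ∃ S ∈ L, le T S}

end FreeKAD

namespace FreeKAD

/-- Terms of the signature `{∘, +, 0, 1, D}`. -/
inductive TermD (α : Type) : Type
  | var : α → TermD α
  | zero : TermD α
  | one : TermD α
  | comp : TermD α → TermD α → TermD α
  | add : TermD α → TermD α → TermD α
  | dom : TermD α → TermD α

/-- The operations of a domain semiring on a carrier `S`. -/
structure DSOps (S : Type) : Type where
  add : S → S → S
  mul : S → S → S
  zero : S
  one : S
  dom : S → S

/-- `o` makes `S` into a domain semiring: an idempotent semiring together
with a domain operation `d` satisfying `d(x)·x = x`,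
`d(x·y) = d(x·d(y))`, `d(x) + 1 = 1`, `d(0) = 0` and
`d(x + y) = d(x) + d(y)`. -/
def IsDomainSemiring {S : Type} (o : DSOps S) : Prop :=
  (∀ x y z, o.add (o.add x y) z = o.add x (o.add y z)) ∧
  (∀ x y, o.add x y = o.add y x) ∧
  (∀ x, o.add x x = x) ∧
  (∀ x, o.add o.zero x = x) ∧
  (∀ x y z, o.mul (o.mul x y) z = o.mul x (o.mul y z)) ∧
  (∀ x, o.mul o.one x = x) ∧
  (∀ x, o.mul x o.one = x) ∧
  (∀ x y z, o.mul x (o.add y z) = o.add (o.mul x y) (o.mul x z)) ∧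
  (∀ x y z, o.mul (o.add x y) z = o.add (o.mul x z) (o.mul y z)) ∧
  (∀ x, o.mul o.zero x = o.zero) ∧
  (∀ x, o.mul x o.zero = o.zero) ∧
  (∀ x, o.mul (o.dom x) x = x) ∧
  (∀ x y, o.dom (o.mul x y) = o.dom (o.mul x (o.dom y))) ∧
  (∀ x, o.add (o.dom x) o.one = o.one) ∧
  (o.dom o.zero = o.zero) ∧
  (∀ x y, o.dom (o.add x y) = o.add (o.dom x) (o.dom y))

variable {α : Type}

/-- Interpretation of a `{∘, +, 0, 1, D}`-term in a domain semiring under an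
assignment `v` of values to the variables. -/
def dsinterp {S : Type} (o : DSOps S) (v : α → S) : TermD α → S
  | .var a => v a
  | .zero => o.zero
  | .one => o.one
  | .comp s t => o.mul (dsinterp o v s) (dsinterp o v t)
  | .add s t => o.add (dsinterp o v s) (dsinterp o v t)
  | .dom s => o.dom (dsinterp o v s)

/-- Relational interpretation of a `{∘, +, 0, 1, D}`-term. -/
def rinterpD {X : Type} (f : α → X → X → Prop) : TermD α → X → X → Prop
  | .var a => f a
  | .zero => fun _ _ => False
  | .one => fun x y => x = y
  | .comp s t => fun x y => ∃ z, rinterpD f s x z ∧ rinterpD f t z y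
  | .add s t => fun x y => rinterpD f s x y ∨ rinterpD f t x y
  | .dom s => fun x y => x = y ∧ ∃ z, rinterpD f s x z

namespace Cmpl

open FreeKAD

variable {α : Type}

/-- Unpointed finite trees with `α`-labelled edges. -/
inductive UT (α : Type) : Type
  | node : List (α × UT α) → UT α

/-- Pointed trees: side subtrees along a spine from the root to the point. -/
inductive PT (α : Type) : Type
  | pt : List (α × UT α) → PT α
  | step : List (α × UT α) → α → PT α → PT α

def utC : UT α → List (α × UT α)
  | .node cs => cs

mutual
def wt : UT α → TermD α
  | .node cs => wl cs
def wl : List (α × UT α) → TermD α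
  | [] => .one
  | p :: cs => .comp (.dom (.comp (.var p.1) (wt p.2))) (wl cs)
end

theorem wt_eq (U : UT α) : wt U = wl (utC U) := by cases U <;> rfl

def tau : PT α → TermD α
  | .pt cs => wl cs
  | .step cs a P => .comp (wl cs) (.comp (.var a) (tau P))

def addside (cs : List (α × UT α)) : PT α → PT α
  | .pt cs' => .pt (cs ++ cs')
  | .step cs' a P => .step (cs ++ cs') a P

def graftC : PT α → PT α → PT α
  | .pt cs, S => addside cs S
  | .step cs a P, S => .step cs a (graftC P S)

def full : PT α → UT α
  | .pt cs => .node cs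
  | .step cs a P => .node (cs ++ [(a, full P)])

def domP (T : PT α) : PT α := .pt (utC (full T))

def nf : TermD α → List (PT α)
  | .var a => [.step [] a (.pt [])]
  | .zero => []
  | .one => [.pt []]
  | .comp s t => (nf s).flatMap fun T => (nf t).map (graftC T)
  | .add s t => nf s ++ nf t
  | .dom s => (nf s).map domP

def sumT : List (TermD α) → TermD α
  | [] => .zero
  | u :: l => .add u (sumT l)

section Alg

variable {S : Type} {o : DSOps S}

def dle (o : DSOps S) (x y : S) : Prop := o.add x y = y

variable (h : IsDomainSemiring o)
include h

theorem aA : ∀ x y z, o.add (o.add x y) z = o.add x (o.add y z) := h.1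
theorem aC : ∀ x y, o.add x y = o.add y x := h.2.1
theorem aI : ∀ x, o.add x x = x := h.2.2.1
theorem zA : ∀ x, o.add o.zero x = x := h.2.2.2.1
theorem mA : ∀ x y z, o.mul (o.mul x y) z = o.mul x (o.mul y z) := h.2.2.2.2.1
theorem oM : ∀ x, o.mul o.one x = x := h.2.2.2.2.2.1
theorem mO : ∀ x, o.mul x o.one = x := h.2.2.2.2.2.2.1
theorem lD : ∀ x y z, o.mul x (o.add y z) = o.add (o.mul x y) (o.mul x z) :=
  h.2.2.2.2.2.2.2.1
theorem rD : ∀ x y z, o.mul (o.add x y) z = o.add (o.mul x z) (o.mul y z) :=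
  h.2.2.2.2.2.2.2.2.1
theorem zM : ∀ x, o.mul o.zero x = o.zero := h.2.2.2.2.2.2.2.2.2.1
theorem mZ : ∀ x, o.mul x o.zero = o.zero := h.2.2.2.2.2.2.2.2.2.2.1
theorem dM : ∀ x, o.mul (o.dom x) x = x := h.2.2.2.2.2.2.2.2.2.2.2.1
theorem dL : ∀ x y, o.dom (o.mul x y) = o.dom (o.mul x (o.dom y)) :=
  h.2.2.2.2.2.2.2.2.2.2.2.2.1
theorem dS : ∀ x, o.add (o.dom x) o.one = o.one := h.2.2.2.2.2.2.2.2.2.2.2.2.2.1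
theorem dZ : o.dom o.zero = o.zero := h.2.2.2.2.2.2.2.2.2.2.2.2.2.2.1
theorem dA : ∀ x y, o.dom (o.add x y) = o.add (o.dom x) (o.dom y) :=
  h.2.2.2.2.2.2.2.2.2.2.2.2.2.2.2

theorem aZ : ∀ x, o.add x o.zero = x := fun x => by rw [aC h, zA h]

theorem le_rfl' {x : S} : dle o x x := aI h x

theorem le_trans' {x y z : S} (h1 : dle o x y) (h2 : dle o y z) : dle o x z := by
  unfold dle at *
  rw [← h2, ← aA h, h1]

theorem le_antisymm' {x y : S} (h1 : dle o x y) (h2 : dle o y x) : x = y :=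
  calc x = o.add y x := h2.symm
  _ = o.add x y := aC h y x
  _ = y := h1

theorem le_add_left {x y : S} : dle o x (o.add x y) := by
  unfold dle; rw [← aA h, aI h]

theorem le_add_right {x y : S} : dle o y (o.add x y) := by
  rw [aC h]; exact le_add_left h

theorem add_le' {x y z : S} (h1 : dle o x z) (h2 : dle o y z) :
    dle o (o.add x y) z := by
  unfold dle at *
  rw [aA h, h2, h1]

theorem zero_le' {x : S} : dle o o.zero x := zA h x

theorem mul_le_left {x y z : S} (h1 : dle o x y) :
    dle o (o.mul z x) (o.mul z y) := by
  unfold dle at *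
  rw [← lD h, h1]

theorem mul_le_right {x y z : S} (h1 : dle o x y) :
    dle o (o.mul x z) (o.mul y z) := by
  unfold dle at *
  rw [← rD h, h1]

theorem dom_mono {x y : S} (h1 : dle o x y) : dle o (o.dom x) (o.dom y) := by
  unfold dle at *
  rw [← dA h, h1]

theorem dom_le_one {x : S} : dle o (o.dom x) o.one := dS h x

theorem dom_one : o.dom o.one = o.one := by
  have h1 := dM h o.one
  rwa [mO h] at h1

theorem dom_dom (x : S) : o.dom (o.dom x) = o.dom x := by
  have h1 : o.dom (o.mul o.one (o.dom x)) = o.dom (o.mul o.one x) :=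
    (dL h o.one x).symm
  rwa [oM h, oM h] at h1

theorem dom_mul_le_doml (x y : S) : dle o (o.dom (o.mul x y)) (o.dom x) := by
  have h1 : dle o (o.mul x (o.dom y)) (o.mul x o.one) :=
    mul_le_left h (dom_le_one h)
  rw [mO h] at h1
  rw [dL h]
  exact dom_mono h h1

theorem dom_mul_le_domr {p : S} (hp : dle o p o.one) (z : S) :
    dle o (o.dom (o.mul p z)) (o.dom z) := by
  have h1 : dle o (o.mul p z) (o.mul o.one z) := mul_le_right h hp
  rw [oM h] at h1
  exact dom_mono h h1

theorem dom_idem (x : S) : o.mul (o.dom x) (o.dom x) = o.dom x := by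
  have h1 := dM h (o.dom x)
  rwa [dom_dom h] at h1

theorem sub_le_dom {x : S} (hx : dle o x o.one) : dle o x (o.dom x) := by
  have h1 : dle o (o.mul (o.dom x) x) (o.mul (o.dom x) o.one) :=
    mul_le_left h hx
  rw [mO h, dM h] at h1
  exact h1

theorem locality (x y : S) :
    o.dom (o.mul (o.dom x) y) = o.mul (o.dom x) (o.dom y) := by
  apply le_antisymm' h
  · have hx : dle o (o.dom (o.mul (o.dom x) y)) (o.dom x) := by
      have := dom_mul_le_doml h (o.dom x) y
      rwa [dom_dom h] at this
    have hy : dle o (o.dom (o.mul (o.dom x) y)) (o.dom y) :=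
      dom_mul_le_domr h (dom_le_one h) y
    have hidem := dom_idem h (o.mul (o.dom x) y)
    have key : dle o (o.mul (o.dom (o.mul (o.dom x) y)) (o.dom (o.mul (o.dom x) y)))
        (o.mul (o.dom x) (o.dom y)) :=
      le_trans' h (mul_le_right h hx) (mul_le_left h hy)
    rwa [hidem] at key
  · have hw : dle o (o.mul (o.dom x) (o.dom y)) o.one := by
      have h1 : dle o (o.mul (o.dom x) (o.dom y)) (o.mul o.one (o.dom y)) :=
        mul_le_right h (dom_le_one h)
      rw [oM h] at h1
      exact le_trans' h h1 (dom_le_one h)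
    have h2 := sub_le_dom h hw
    rwa [← dL h] at h2

theorem dom_domclosed_mul {p : S} (hp : o.dom p = p) (z : S) :
    o.dom (o.mul p z) = o.mul p (o.dom z) := by
  conv_lhs => rw [← hp]
  rw [locality h, hp]

theorem domclosed_mul {p q : S} (hp : o.dom p = p) (hq : o.dom q = q) :
    o.dom (o.mul p q) = o.mul p q := by
  rw [dom_domclosed_mul h hp, hq]

theorem domclosed_le_one {p : S} (hp : o.dom p = p) : dle o p o.one := by
  rw [← hp]; exact dom_le_one h

theorem domclosed_idem {p : S} (hp : o.dom p = p) : o.mul p p = p := by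
  have h1 := dom_idem h p
  rwa [hp] at h1

variable (v : α → S)

theorem wl_closed : ∀ cs : List (α × UT α),
    o.dom (dsinterp o v (wl cs)) = dsinterp o v (wl cs)
  | [] => by
      show o.dom (dsinterp o v TermD.one) = _
      simp only [dsinterp]
      exact dom_one h
  | p :: cs => by
      show o.dom (dsinterp o v (TermD.comp _ _)) = _
      simp only [dsinterp]
      exact domclosed_mul h (dom_dom h _) (wl_closed cs)

theorem wl_le_one (cs : List (α × UT α)) :
    dle o (dsinterp o v (wl cs)) o.one :=
  domclosed_le_one h (wl_closed h v cs)

theorem wl_append : ∀ cs cs' : List (α × UT α),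
    dsinterp o v (wl (cs ++ cs')) =
      o.mul (dsinterp o v (wl cs)) (dsinterp o v (wl cs'))
  | [], cs' => by
      show _ = o.mul (dsinterp o v TermD.one) _
      simp only [dsinterp, List.nil_append]
      rw [oM h]
  | p :: cs, cs' => by
      show o.mul (o.dom (o.mul (v p.1) (dsinterp o v (wt p.2))))
          (dsinterp o v (wl (cs ++ cs'))) =
        o.mul (o.mul (o.dom (o.mul (v p.1) (dsinterp o v (wt p.2))))
          (dsinterp o v (wl cs))) (dsinterp o v (wl cs'))
      rw [wl_append cs cs', mA h]

theorem wl_le_factor {a : α} {U : UT α} : ∀ cs : List (α × UT α),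
    (a, U) ∈ cs →
    dle o (dsinterp o v (wl cs)) (o.dom (o.mul (v a) (dsinterp o v (wt U))))
  | p :: cs, hmem => by
      rcases List.mem_cons.1 hmem with h1 | h1
      · subst h1
        show dle o (dsinterp o v (TermD.comp _ _)) _
        simp only [dsinterp]
        have := mul_le_left h (z := o.dom (o.mul (v a) (dsinterp o v (wt U))))
          (wl_le_one h v cs)
        rwa [mO h] at this
      · show dle o (dsinterp o v (TermD.comp _ _)) _
        simp only [dsinterp]
        have h2 : dle o
            (o.mul (o.dom (o.mul (v p.1) (dsinterp o v (wt p.2)))) (dsinterp o v (wl cs)))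
            (o.mul o.one (dsinterp o v (wl cs))) :=
          mul_le_right h (dom_le_one h)
        rw [oM h] at h2
        exact le_trans' h h2 (wl_le_factor cs h1)

theorem wl_le_of_all {r : S} (hr : o.dom r = r) : ∀ cs : List (α × UT α),
    (∀ a U, (a, U) ∈ cs → dle o r (o.dom (o.mul (v a) (dsinterp o v (wt U))))) →
    dle o r (dsinterp o v (wl cs))
  | [], _ => by
      show dle o r (dsinterp o v TermD.one)
      simp only [dsinterp]
      exact domclosed_le_one h hr
  | p :: cs, hall => by
      show dle o r (dsinterp o v (TermD.comp _ _))
      simp only [dsinterp]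
      have h1 : dle o r (o.dom (o.mul (v p.1) (dsinterp o v (wt p.2)))) :=
        hall p.1 p.2 List.mem_cons_self
      have h2 : dle o r (dsinterp o v (wl cs)) :=
        wl_le_of_all hr cs fun a U hm => hall a U (List.mem_cons_of_mem p hm)
      have key : dle o (o.mul r r)
          (o.mul (o.dom (o.mul (v p.1) (dsinterp o v (wt p.2)))) (dsinterp o v (wl cs))) :=
        le_trans' h (mul_le_right h h1) (mul_le_left h h2)
      rwa [domclosed_idem h hr] at key

theorem tau_graft : ∀ T S' : PT α,
    dsinterp o v (tau (graftC T S')) =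
      o.mul (dsinterp o v (tau T)) (dsinterp o v (tau S'))
  | .pt cs, .pt cs' => by
      show dsinterp o v (wl (cs ++ cs')) = _
      exact wl_append h v cs cs'
  | .pt cs, .step cs' a P => by
      show o.mul (dsinterp o v (wl (cs ++ cs'))) (o.mul (v a) (dsinterp o v (tau P))) =
        o.mul (dsinterp o v (wl cs))
          (o.mul (dsinterp o v (wl cs')) (o.mul (v a) (dsinterp o v (tau P))))
      rw [wl_append h v cs cs', mA h]
  | .step cs a P, S' => by
      show o.mul (dsinterp o v (wl cs)) (o.mul (v a) (dsinterp o v (tau (graftC P S')))) =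
        o.mul (o.mul (dsinterp o v (wl cs)) (o.mul (v a) (dsinterp o v (tau P))))
          (dsinterp o v (tau S'))
      rw [tau_graft P S', mA h, mA h]

theorem tau_full : ∀ T : PT α,
    o.dom (dsinterp o v (tau T)) = dsinterp o v (wt (full T))
  | .pt cs => by
      show o.dom (dsinterp o v (wl cs)) = dsinterp o v (wl cs)
      exact wl_closed h v cs
  | .step cs a P => by
      show o.dom (dsinterp o v (TermD.comp _ (TermD.comp _ _))) =
        dsinterp o v (wl (cs ++ [(a, full P)]))
      simp only [dsinterp]
      rw [dom_domclosed_mul h (wl_closed h v cs), dL h,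
        tau_full P, wl_append h v cs]
      show _ = o.mul (dsinterp o v (wl cs))
        (o.mul (o.dom (o.mul (v a) (dsinterp o v (wt (full P))))) o.one)
      rw [mO h]

theorem tau_domP (T : PT α) :
    dsinterp o v (tau (domP T)) = o.dom (dsinterp o v (tau T)) := by
  rw [tau_full h v T, wt_eq]
  rfl

theorem sum_append : ∀ l1 l2 : List (TermD α),
    dsinterp o v (sumT (l1 ++ l2)) =
      o.add (dsinterp o v (sumT l1)) (dsinterp o v (sumT l2))
  | [], l2 => by
      show _ = o.add (dsinterp o v TermD.zero) _
      simp only [dsinterp, List.nil_append]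
      rw [zA h]
  | u :: l1, l2 => by
      show o.add (dsinterp o v u) (dsinterp o v (sumT (l1 ++ l2))) =
        o.add (o.add (dsinterp o v u) (dsinterp o v (sumT l1))) (dsinterp o v (sumT l2))
      rw [sum_append l1 l2, aA h]

theorem map_graft_sum (T : PT α) : ∀ l2 : List (PT α),
    dsinterp o v (sumT ((l2.map (graftC T)).map tau)) =
      o.mul (dsinterp o v (tau T)) (dsinterp o v (sumT (l2.map tau)))
  | [] => by
      show dsinterp o v TermD.zero = o.mul _ (dsinterp o v TermD.zero)
      simp only [dsinterp]
      rw [mZ h]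
  | U :: l2 => by
      show dsinterp o v (TermD.add _ _) = o.mul _ (dsinterp o v (TermD.add _ _))
      simp only [dsinterp, List.map_cons]
      rw [show dsinterp o v (sumT ((l2.map (graftC T)).map tau)) = _ from
        map_graft_sum T l2, lD h, tau_graft h v]

theorem nf_comp_sum : ∀ l1 l2 : List (PT α),
    dsinterp o v (sumT (((l1.flatMap fun T => l2.map (graftC T))).map tau)) =
      o.mul (dsinterp o v (sumT (l1.map tau))) (dsinterp o v (sumT (l2.map tau)))
  | [], l2 => by
      show dsinterp o v TermD.zero = o.mul (dsinterp o v TermD.zero) _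
      simp only [dsinterp]
      rw [zM h]
  | T :: l1, l2 => by
      rw [List.flatMap_cons, List.map_append, sum_append h v]
      rw [map_graft_sum h v T l2,
        show dsinterp o v (sumT (((l1.flatMap fun T => l2.map (graftC T))).map tau)) = _
          from nf_comp_sum l1 l2]
      show _ = o.mul (dsinterp o v (TermD.add _ _)) _
      simp only [dsinterp, List.map_cons]
      rw [rD h]

theorem dom_sum : ∀ l : List (PT α),
    dsinterp o v (sumT ((l.map domP).map tau)) =
      o.dom (dsinterp o v (sumT (l.map tau)))
  | [] => by
      show dsinterp o v TermD.zero = o.dom (dsinterp o v TermD.zero)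
      simp only [dsinterp]
      rw [dZ h]
  | T :: l => by
      show dsinterp o v (TermD.add _ _) = o.dom (dsinterp o v (TermD.add _ _))
      simp only [dsinterp, List.map_cons]
      rw [dA h, tau_domP h v, show dsinterp o v (sumT ((l.map domP).map tau)) = _ from
        dom_sum l]

theorem nf_correct : ∀ u : TermD α,
    dsinterp o v u = dsinterp o v (sumT ((nf u).map tau))
  | .var a => by
      show dsinterp o v (TermD.var a) =
        dsinterp o v (TermD.add (TermD.comp TermD.one (TermD.comp (TermD.var a) TermD.one)) TermD.zero)
      simp only [dsinterp]
      rw [oM h, mO h, aZ h]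
  | .zero => rfl
  | .one => by
      show dsinterp o v TermD.one = dsinterp o v (TermD.add TermD.one TermD.zero)
      simp only [dsinterp]
      rw [aZ h]
  | .comp s t => by
      show o.mul (dsinterp o v s) (dsinterp o v t) = _
      rw [nf_correct s, nf_correct t]
      exact (nf_comp_sum h v (nf s) (nf t)).symm
  | .add s t => by
      show o.add (dsinterp o v s) (dsinterp o v t) = _
      rw [nf_correct s, nf_correct t, show nf (TermD.add s t) = nf s ++ nf t from rfl,
        List.map_append, sum_append h v]
  | .dom s => by
      show o.dom (dsinterp o v s) = _
      rw [nf_correct s]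
      exact (dom_sum h v (nf s)).symm

theorem mem_le_sum {T : PT α} : ∀ l : List (PT α), T ∈ l →
    dle o (dsinterp o v (tau T)) (dsinterp o v (sumT (l.map tau)))
  | T' :: l, hmem => by
      show dle o _ (dsinterp o v (TermD.add _ _))
      simp only [dsinterp]
      rcases List.mem_cons.1 hmem with h1 | h1
      · subst h1; exact le_add_left h
      · exact le_trans' h (mem_le_sum l h1) (le_add_right h)

theorem sum_le {c : S} : ∀ l : List (PT α),
    (∀ T ∈ l, dle o (dsinterp o v (tau T)) c) →
    dle o (dsinterp o v (sumT (l.map tau))) c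
  | [], _ => by
      show dle o (dsinterp o v TermD.zero) c
      simp only [dsinterp]
      exact zero_le' h
  | T :: l, hall => by
      show dle o (dsinterp o v (TermD.add _ _)) c
      simp only [dsinterp]
      exact add_le' h (hall T List.mem_cons_self)
        (sum_le l fun T' hm => hall T' (List.mem_cons_of_mem T hm))

end Alg

end Cmpl


namespace Cmpl

open FreeKAD

variable {α : Type}

section Rel

def relOps (X : Type) : DSOps (X → X → Prop) :=
  ⟨relUnion, relComp, relEmpty, relId, relDom⟩

theorem relDS (X : Type) : IsDomainSemiring (relOps X) := by
  refine ⟨?_, ?_, ?_, ?_, ?_, ?_, ?_, ?_, ?_, ?_, ?_, ?_, ?_, ?_, ?_, ?_⟩ <;>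
  · intros
    funext x y
    simp only [relOps, relUnion, relComp, relDom, relId, relEmpty, eq_iff_iff]
    first
    | tauto
    | aesop

theorem rinterp_ds {X : Type} (f : α → X → X → Prop) :
    ∀ u : TermD α, rinterpD f u = dsinterp (relOps X) f u
  | .var a => rfl
  | .zero => rfl
  | .one => rfl
  | .comp s t => by
      show (fun x y => ∃ z, rinterpD f s x z ∧ rinterpD f t z y) = _
      rw [rinterp_ds f s, rinterp_ds f t]
      rfl
  | .add s t => by
      show (fun x y => rinterpD f s x y ∨ rinterpD f t x y) = _
      rw [rinterp_ds f s, rinterp_ds f t]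
      rfl
  | .dom s => by
      show (fun x y => x = y ∧ ∃ z, rinterpD f s x z) = _
      rw [rinterp_ds f s]
      rfl

theorem rinterp_sum {X : Type} (f : α → X → X → Prop) :
    ∀ (l : List (TermD α)) (x y : X),
      rinterpD f (sumT l) x y ↔ ∃ u ∈ l, rinterpD f u x y
  | [], x, y => by
      constructor
      · intro h1; exact absurd h1 (fun h2 => h2)
      · rintro ⟨u, hu, -⟩; exact absurd hu List.not_mem_nil
  | u :: l, x, y => by
      constructor
      · rintro (h1 | h1)
        · exact ⟨u, List.mem_cons_self, h1⟩
        · obtain ⟨w, hw, h2⟩ := (rinterp_sum f l x y).1 h1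
          exact ⟨w, List.mem_cons_of_mem u hw, h2⟩
      · rintro ⟨w, hw, h2⟩
        rcases List.mem_cons.1 hw with rfl | hw'
        · exact Or.inl h2
        · exact Or.inr ((rinterp_sum f l x y).2 ⟨w, hw', h2⟩)

end Rel

abbrev M (α : Type) : Type := Sum (UT α) (PT α)

def mf (a : α) (x y : M α) : Prop :=
  match x with
  | .inl U => ∃ V, y = .inl V ∧ (a, V) ∈ utC U
  | .inr (.pt cs) => ∃ V, y = .inl V ∧ (a, V) ∈ cs
  | .inr (.step cs b P) => (∃ V, y = .inl V ∧ (a, V) ∈ cs) ∨ (a = b ∧ y = .inr P)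

def ep : PT α → M α
  | .pt cs => Sum.inr (.pt cs)
  | .step _ _ P => ep P

theorem ep_pt : ∀ T : PT α, ∃ ds, ep T = Sum.inr (PT.pt ds)
  | .pt cs => ⟨cs, rfl⟩
  | .step _ _ P => ep_pt P

theorem wl_diag {X : Type} (f : α → X → X → Prop) :
    ∀ (cs : List (α × UT α)) (x y : X), rinterpD f (wl cs) x y → x = y
  | [], x, y, hxy => hxy
  | p :: cs, x, y, h1 => by
      have h1' : ∃ z, (x = z ∧ ∃ w, rinterpD f (.comp (.var p.1) (wt p.2)) x w) ∧
          rinterpD f (wl cs) z y := h1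
      obtain ⟨z, ⟨rfl, -⟩, h2⟩ := h1'
      exact wl_diag f cs x y h2

theorem lemE {X : Type} (f : α → X → X → Prop) :
    ∀ (cs : List (α × UT α)) (x y : X),
      rinterpD f (wl cs) x y ↔
        (x = y ∧ ∀ a U, (a, U) ∈ cs →
          ∃ m, f a x m ∧ ∃ z, rinterpD f (wt U) m z)
  | [], x, y => by
      constructor
      · intro h1
        refine ⟨h1, ?_⟩
        intro a U hm
        exact absurd hm List.not_mem_nil
      · rintro ⟨rfl, -⟩
        exact rfl
  | p :: cs, x, y => by
      constructor
      · intro h1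
        have h1' : ∃ z, (x = z ∧ ∃ w, ∃ m, f p.1 x m ∧ rinterpD f (wt p.2) m w) ∧
            rinterpD f (wl cs) z y := h1
        obtain ⟨z, ⟨rfl, w, m, hm, hw⟩, h2⟩ := h1'
        obtain ⟨hxy, hall⟩ := (lemE f cs x y).1 h2
        refine ⟨hxy, ?_⟩
        intro a U hmem
        rcases List.mem_cons.1 hmem with he | he
        · subst he
          exact ⟨m, hm, w, hw⟩
        · exact hall a U he
      · rintro ⟨rfl, hall⟩
        obtain ⟨m, hm, z, hz⟩ := hall p.1 p.2 List.mem_cons_self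
        refine ⟨x, ⟨rfl, z, m, hm, hz⟩, ?_⟩
        exact (lemE f cs x x).2 ⟨rfl, fun a U hm' => hall a U (List.mem_cons_of_mem _ hm')⟩

theorem inl_closed : ∀ (u : TermD α) (V : UT α) (y : M α),
    rinterpD (mf (α := α)) u (Sum.inl V) y → ∃ W, y = Sum.inl W
  | .var a, V, y, h1 => by
      obtain ⟨W, rfl, -⟩ := h1
      exact ⟨W, rfl⟩
  | .zero, V, y, h1 => absurd h1 (fun h2 => h2)
  | .one, V, y, h1 => ⟨V, (show Sum.inl V = y from h1).symm⟩
  | .comp s t, V, y, h1 => by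
      obtain ⟨z, h2, h3⟩ := h1
      obtain ⟨W, rfl⟩ := inl_closed s V z h2
      exact inl_closed t W y h3
  | .add s t, V, y, h1 => by
      rcases h1 with h2 | h2
      · exact inl_closed s V y h2
      · exact inl_closed t V y h2
  | .dom s, V, y, h1 => ⟨V, h1.1.symm⟩

theorem satU : ∀ U : UT α, rinterpD (mf (α := α)) (wt U) (Sum.inl U) (Sum.inl U)
  | .node cs => by
      rw [wt_eq, lemE]
      refine ⟨rfl, ?_⟩
      intro a U hmem
      exact ⟨Sum.inl U, ⟨U, rfl, hmem⟩, Sum.inl U, satU U⟩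
termination_by U => sizeOf U
decreasing_by
  simp only [utC] at hmem
  have h1 := List.sizeOf_lt_of_mem hmem
  simp at h1 ⊢
  omega

theorem satP : ∀ T : PT α, rinterpD (mf (α := α)) (tau T) (Sum.inr T) (ep T)
  | .pt cs => by
      show rinterpD mf (wl cs) (Sum.inr (PT.pt cs)) (Sum.inr (PT.pt cs))
      rw [lemE]
      exact ⟨rfl, fun a U hmem => ⟨Sum.inl U, ⟨U, rfl, hmem⟩, Sum.inl U, satU U⟩⟩
  | .step cs a P => by
      show rinterpD mf (.comp (wl cs) (.comp (.var a) (tau P)))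
        (Sum.inr (PT.step cs a P)) (ep P)
      refine ⟨Sum.inr (PT.step cs a P), ?_, Sum.inr P, Or.inr ⟨rfl, rfl⟩, satP P⟩
      rw [lemE]
      exact ⟨rfl, fun b U hmem => ⟨Sum.inl U, Or.inl ⟨U, rfl, hmem⟩, Sum.inl U, satU U⟩⟩

end Cmpl


namespace Cmpl

open FreeKAD

variable {α : Type}

section Main

variable {S : Type} {o : DSOps S} (h : IsDomainSemiring o) (v : α → S)

theorem wt_to_wl' {X : Type} {f : α → X → X → Prop} {U : UT α} {x y : X}
    (h1 : rinterpD f (wt U) x y) : rinterpD f (wl (utC U)) x y := by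
  rwa [wt_eq] at h1

include h

theorem lemB : ∀ (U' V : UT α),
    rinterpD (mf (α := α)) (wt U') (Sum.inl V) (Sum.inl V) →
    dle o (dsinterp o v (wt V)) (dsinterp o v (wt U'))
  | .node cs', .node csv, hsat => by
      rw [wt_eq, lemE] at hsat
      obtain ⟨-, hall⟩ := hsat
      show dle o (dsinterp o v (wl csv)) (dsinterp o v (wl cs'))
      refine wl_le_of_all h v (wl_closed h v csv) cs' ?_
      intro b W' hmem
      obtain ⟨m, hedge, z, hz⟩ := hall b W' hmem
      obtain ⟨W, rfl, hW⟩ := hedge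
      have hz' : rinterpD (mf (α := α)) (wt W') (Sum.inl W) (Sum.inl W) := by
        have e := wl_diag (mf (α := α)) (utC W') (Sum.inl W) z (wt_to_wl' hz)
        rw [← e] at hz
        exact hz
      have hrec := lemB W' W hz'
      exact le_trans' h (wl_le_factor h v csv hW) (dom_mono h (mul_le_left h hrec))
termination_by U' _ _ => sizeOf U'
decreasing_by
  try simp only [utC] at hmem
  have h1 := List.sizeOf_lt_of_mem hmem
  simp at h1 ⊢
  omega

theorem lemC : ∀ (U' : UT α) (P : PT α),
    rinterpD (mf (α := α)) (wt U') (Sum.inr P) (Sum.inr P) →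
    dle o (o.dom (dsinterp o v (tau P))) (dsinterp o v (wt U'))
  | .node cs', P, hsat => by
      rw [wt_eq, lemE] at hsat
      obtain ⟨-, hall⟩ := hsat
      show dle o _ (dsinterp o v (wl cs'))
      refine wl_le_of_all h v (dom_dom h _) cs' ?_
      intro b W' hmem
      obtain ⟨m, hedge, z, hz⟩ := hall b W' hmem
      cases P with
      | pt cs =>
        obtain ⟨W, rfl, hW⟩ := hedge
        have hz' : rinterpD (mf (α := α)) (wt W') (Sum.inl W) (Sum.inl W) := by
          have e := wl_diag (mf (α := α)) (utC W') (Sum.inl W) z (wt_to_wl' hz)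
          rw [← e] at hz
          exact hz
        have hrec := lemB h v W' W hz'
        rw [show tau (PT.pt cs) = wl cs from rfl, wl_closed h v cs]
        exact le_trans' h (wl_le_factor h v cs hW) (dom_mono h (mul_le_left h hrec))
      | step cs a Q =>
        have htau : dsinterp o v (tau (PT.step cs a Q)) =
            o.mul (dsinterp o v (wl cs)) (o.mul (v a) (dsinterp o v (tau Q))) := rfl
        rcases hedge with ⟨W, rfl, hW⟩ | ⟨hba, rfl⟩
        · have hz' : rinterpD (mf (α := α)) (wt W') (Sum.inl W) (Sum.inl W) := by
            have e := wl_diag (mf (α := α)) (utC W') (Sum.inl W) z (wt_to_wl' hz)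
            rw [← e] at hz
            exact hz
          have hrec := lemB h v W' W hz'
          have hd : dle o (o.dom (dsinterp o v (tau (PT.step cs a Q))))
              (dsinterp o v (wl cs)) := by
            rw [htau]
            have k := dom_mul_le_doml h (dsinterp o v (wl cs))
              (o.mul (v a) (dsinterp o v (tau Q)))
            rwa [wl_closed h v cs] at k
          exact le_trans' h hd (le_trans' h (wl_le_factor h v cs hW)
            (dom_mono h (mul_le_left h hrec)))
        · subst hba
          have hz' : rinterpD (mf (α := α)) (wt W') (Sum.inr Q) (Sum.inr Q) := by
            have e := wl_diag (mf (α := α)) (utC W') (Sum.inr Q) z (wt_to_wl' hz)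
            rw [← e] at hz
            exact hz
          have hrec := lemC W' Q hz'
          have hd1 : dle o (o.dom (dsinterp o v (tau (PT.step cs b Q))))
              (o.dom (o.mul (v b) (dsinterp o v (tau Q)))) := by
            rw [htau]
            exact dom_mul_le_domr h (wl_le_one h v cs) _
          have hd2 := dom_mono h (mul_le_left h (z := v b) hrec)
          rw [← dL h] at hd2
          exact le_trans' h hd1 hd2
termination_by U' _ _ => sizeOf U'
decreasing_by
  all_goals
    try simp only [utC] at hmem
    have h1 := List.sizeOf_lt_of_mem hmem
    simp at h1 ⊢
    omega

theorem main : ∀ (S' T : PT α),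
    rinterpD (mf (α := α)) (tau S') (Sum.inr T) (ep T) →
    dle o (dsinterp o v (tau T)) (dsinterp o v (tau S'))
  | .pt cs', T, hsat => by
      have hd := wl_diag (mf (α := α)) cs' (Sum.inr T) (ep T) hsat
      obtain ⟨ds, hds⟩ := ep_pt T
      rw [hds] at hd
      have hT : T = PT.pt ds := Sum.inr.inj hd
      subst hT
      have hsat' : rinterpD (mf (α := α)) (wl cs')
          (Sum.inr (PT.pt ds)) (Sum.inr (PT.pt ds)) := by
        rw [show ep (PT.pt ds) = Sum.inr (PT.pt ds) from rfl] at hsat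
        exact hsat
      rw [lemE] at hsat'
      obtain ⟨-, hall⟩ := hsat'
      show dle o (dsinterp o v (wl ds)) (dsinterp o v (wl cs'))
      refine wl_le_of_all h v (wl_closed h v ds) cs' ?_
      intro b W' hmem
      obtain ⟨m, hedge, z, hz⟩ := hall b W' hmem
      obtain ⟨W, rfl, hW⟩ := hedge
      have hz' : rinterpD (mf (α := α)) (wt W') (Sum.inl W) (Sum.inl W) := by
        have e := wl_diag (mf (α := α)) (utC W') (Sum.inl W) z (wt_to_wl' hz)
        rw [← e] at hz
        exact hz
      have hrec := lemB h v W' W hz'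
      exact le_trans' h (wl_le_factor h v ds hW) (dom_mono h (mul_le_left h hrec))
  | .step cs' a' P', T, hsat => by
      have hsat' : ∃ z1, rinterpD (mf (α := α)) (wl cs') (Sum.inr T) z1 ∧
          ∃ z2, mf a' z1 z2 ∧ rinterpD (mf (α := α)) (tau P') z2 (ep T) := hsat
      obtain ⟨z1, hside, z2, hedge, hP⟩ := hsat'
      have hz1 : Sum.inr T = z1 := wl_diag _ cs' _ _ hside
      rw [← hz1] at hside hedge
      cases T with
      | pt cs =>
        obtain ⟨W, rfl, -⟩ := hedge
        obtain ⟨W2, hW2⟩ := inl_closed (tau P') W (ep (PT.pt cs)) hP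
        rw [show ep (PT.pt cs) = Sum.inr (PT.pt cs) from rfl] at hW2
        exact nomatch hW2
      | step cs a P =>
        rcases hedge with ⟨W, rfl, -⟩ | ⟨ha, rfl⟩
        · obtain ⟨W2, hW2⟩ := inl_closed (tau P') W (ep (PT.step cs a P)) hP
          obtain ⟨ds, hds⟩ := ep_pt (PT.step cs a P)
          rw [hds] at hW2
          exact nomatch hW2
        · subst ha
          have hrecP : dle o (dsinterp o v (tau P)) (dsinterp o v (tau P')) :=
            main P' P (by
              rw [show ep (PT.step cs a' P) = ep P from rfl] at hP
              exact hP)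
          have hsideE := (lemE (mf (α := α)) cs' (Sum.inr (PT.step cs a' P))
            (Sum.inr (PT.step cs a' P))).1 hside
          obtain ⟨-, hall⟩ := hsideE
          have htau : dsinterp o v (tau (PT.step cs a' P)) =
              o.mul (dsinterp o v (wl cs)) (o.mul (v a') (dsinterp o v (tau P))) := rfl
          have hdomle : dle o (o.dom (dsinterp o v (tau (PT.step cs a' P))))
              (dsinterp o v (wl cs')) := by
            refine wl_le_of_all h v (dom_dom h _) cs' ?_
            intro b W' hmem
            obtain ⟨m, hedge2, z, hz⟩ := hall b W' hmem
            rcases hedge2 with ⟨W, rfl, hW⟩ | ⟨hba, rfl⟩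
            · have hz' : rinterpD (mf (α := α)) (wt W') (Sum.inl W) (Sum.inl W) := by
                have e := wl_diag (mf (α := α)) (utC W') (Sum.inl W) z (wt_to_wl' hz)
                rw [← e] at hz
                exact hz
              have hrec := lemB h v W' W hz'
              have hd : dle o (o.dom (dsinterp o v (tau (PT.step cs a' P))))
                  (dsinterp o v (wl cs)) := by
                rw [htau]
                have k := dom_mul_le_doml h (dsinterp o v (wl cs))
                  (o.mul (v a') (dsinterp o v (tau P)))
                rwa [wl_closed h v cs] at k
              exact le_trans' h hd (le_trans' h (wl_le_factor h v cs hW)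
                (dom_mono h (mul_le_left h hrec)))
            · subst hba
              have hz' : rinterpD (mf (α := α)) (wt W') (Sum.inr P) (Sum.inr P) := by
                have e := wl_diag (mf (α := α)) (utC W') (Sum.inr P) z (wt_to_wl' hz)
                rw [← e] at hz
                exact hz
              have hrec := lemC h v W' P hz'
              have hd1 : dle o (o.dom (dsinterp o v (tau (PT.step cs b P))))
                  (o.dom (o.mul (v b) (dsinterp o v (tau P)))) := by
                rw [htau]
                exact dom_mul_le_domr h (wl_le_one h v cs) _
              have hd2 := dom_mono h (mul_le_left h (z := v b) hrec)
              rw [← dL h] at hd2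
              exact le_trans' h hd1 hd2
          have step1 : dle o (dsinterp o v (tau (PT.step cs a' P)))
              (o.mul (dsinterp o v (wl cs')) (dsinterp o v (tau (PT.step cs a' P)))) := by
            have k := mul_le_right h (z := dsinterp o v (tau (PT.step cs a' P))) hdomle
            rw [dM h] at k
            exact k
          have step2 : dle o (dsinterp o v (tau (PT.step cs a' P)))
              (o.mul (v a') (dsinterp o v (tau P'))) := by
            have k1 : dle o (dsinterp o v (tau (PT.step cs a' P)))
                (o.mul (v a') (dsinterp o v (tau P))) := by
              have k2 := mul_le_right h
                (z := o.mul (v a') (dsinterp o v (tau P))) (wl_le_one h v cs)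
              rw [oM h] at k2
              exact k2
            exact le_trans' h k1 (mul_le_left h hrecP)
          show dle o _ (o.mul (dsinterp o v (wl cs')) (o.mul (v a') (dsinterp o v (tau P'))))
          exact le_trans' h step1 (mul_le_left h step2)

end Main

end Cmpl


/-- Equational completeness of domain semirings for
binary relations: for `{∘, +, 0, 1, D}`-terms `s` and `t`, the equation
`s = t` holds in every domain semiring (under every assignment) iff for
every set `X` and every assignment of binary relations on `X` to the
variables, the relational interpretations of `s` and `t` coincide. -/
theorem domain_semiring_equational_completeness {α : Type} (s t : TermD α) :
    (∀ (S : Type) (o : DSOps S), IsDomainSemiring o →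
        ∀ v : α → S, dsinterp o v s = dsinterp o v t) ↔
    (∀ (X : Type) (f : α → X → X → Prop), rinterpD f s = rinterpD f t) := by
  constructor
  · intro hA X f
    rw [Cmpl.rinterp_ds f s, Cmpl.rinterp_ds f t]
    exact hA _ (Cmpl.relOps X) (Cmpl.relDS X) f
  · intro hR Sv o hds v
    rw [Cmpl.nf_correct hds v s, Cmpl.nf_correct hds v t]
    have key : ∀ u w : TermD α,
        (∀ (X : Type) (f : α → X → X → Prop), rinterpD f u = rinterpD f w) →
        Cmpl.dle o (dsinterp o v (Cmpl.sumT ((Cmpl.nf u).map Cmpl.tau)))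
          (dsinterp o v (Cmpl.sumT ((Cmpl.nf w).map Cmpl.tau))) := by
      intro u w hu
      refine Cmpl.sum_le hds v (Cmpl.nf u) ?_
      intro T hT
      have h1 : rinterpD (Cmpl.mf (α := α)) u (Sum.inr T) (Cmpl.ep T) := by
        rw [Cmpl.rinterp_ds (Cmpl.mf (α := α)) u,
          Cmpl.nf_correct (Cmpl.relDS (Cmpl.M α)) (Cmpl.mf (α := α)) u,
          ← Cmpl.rinterp_ds (Cmpl.mf (α := α))]
        exact (Cmpl.rinterp_sum _ _ _ _).2
          ⟨Cmpl.tau T, List.mem_map_of_mem hT, Cmpl.satP T⟩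
      rw [hu (Cmpl.M α) (Cmpl.mf (α := α))] at h1
      rw [Cmpl.rinterp_ds (Cmpl.mf (α := α)) w,
        Cmpl.nf_correct (Cmpl.relDS (Cmpl.M α)) (Cmpl.mf (α := α)) w,
        ← Cmpl.rinterp_ds (Cmpl.mf (α := α))] at h1
      obtain ⟨u', hu', h2⟩ := (Cmpl.rinterp_sum _ _ _ _).1 h1
      obtain ⟨S', hS', rfl⟩ := List.mem_map.1 hu'
      exact Cmpl.le_trans' hds (Cmpl.main hds v S' T h2)
        (Cmpl.mem_le_sum hds v (Cmpl.nf w) hS')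
    exact Cmpl.le_antisymm' hds (key s t hR) (key t s fun X f => (hR X f).symm)


end FreeKAD
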